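/- For every Δ > 0, the function r_Δ is given explicitly by r_Δ(t) = Σ_{k=0}^{n} ((−1)^k / (2k)!) · (t − (k−1)Δ)^{2k} for t ∈ [(n−1)Δ, nΔ], n = 1, 2, ...; in particular r_Δ(t) = 1 − t²/2 for t ∈ [0, Δ] and r_Δ(t) = 1 − t²/2 + (t − Δ)⁴/24 for t ∈ [Δ, 2Δ]. -/

import Mathlib

open MeasureTheory Set Filter

/-- `x` solves the delay equation `x''(t) + p(t)·x(t − τ(t)) = 0` on `I` in the
Carathéodory sense: `x` is differentiable on `I` and on `I` its derivative is an
indefinite integral of `-p(u)·x(u − τ(u))` (so `x` and its derivative are locally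
absolutely continuous there, and the equation holds for a.e. `t ∈ I`). -/
def SolvesDDE (p τ x : ℝ → ℝ) (I : Set ℝ) : Prop :=
  (∀ t ∈ I, HasDerivAt x (deriv x t) t) ∧
  (∀ t₀ ∈ I, ∀ t ∈ I, deriv x t = deriv x t₀ - ∫ u in t₀..t, p u * x (u - τ u))

/-- `r` is the solution `r_Δ` of `r''(t) + r(t − Δ) = 0`, `t ≥ 0`, with `r ≡ 1` on
`(-∞,0]` and `r'(0) = 0` (the derivative is an indefinite integral of `-r(· - Δ)`). -/
def IsDelayCosine (Δ : ℝ) (r : ℝ → ℝ) : Prop :=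
  (∀ t ≤ (0:ℝ), r t = 1) ∧
  (∀ t, 0 ≤ t → HasDerivAt r (deriv r t) t) ∧
  (∀ t, 0 ≤ t → deriv r t = - ∫ u in (0:ℝ)..t, r (u - Δ))

/-- `θ` is the first zero of `r` on `[0,∞)`. -/
def IsFirstZero (r : ℝ → ℝ) (θ : ℝ) : Prop :=
  0 < θ ∧ r θ = 0 ∧ ∀ t, 0 ≤ t → t < θ → 0 < r t

/-- `g(w) = ρ·r(θ − w − Δ)·χ_{[−Δ,0]}(w)`. -/
noncomputable def gAux (ρ Δ θ : ℝ) (r : ℝ → ℝ) : ℝ → ℝ :=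
  (Set.Icc (-Δ) (0:ℝ)).indicator fun w => ρ * r (θ - w - Δ)

/-- The double integral `∫_{-c}^0 (∫_{-c}^s max (β w) (g w) dw) ds`. -/
noncomputable def doubleInt (g β : ℝ → ℝ) (c : ℝ) : ℝ :=
  ∫ s in (-c)..(0:ℝ), ∫ w in (-c)..s, max (β w) (g w)

/-- The recursively defined sequences `β_n`, `ϖ_n` associated with `g`. -/
def IsBetaSeq (g : ℝ → ℝ) (β : ℕ → ℝ → ℝ) (ϖ : ℕ → ℝ) : Prop :=
  (∀ t ≤ (0:ℝ), β 0 t = 1) ∧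
  ∀ n : ℕ,
    (0 < ϖ n ∧ doubleInt g (β n) (ϖ n) = 1) ∧
    (∀ t, t ≤ -ϖ n → β (n+1) t = 1) ∧
    (∀ t, -ϖ n ≤ t → t ≤ 0 →
      β (n+1) t = 1 - ∫ s in (-ϖ n)..t, ∫ w in (-ϖ n)..s, max (β n w) (g w))

/-- `x` has a locally absolutely continuous derivative on `[a,b]`, with a.e. second
derivative `w`. -/
def HasSecondDerivAEOn (x w : ℝ → ℝ) (a b : ℝ) : Prop :=
  (∀ t ∈ Set.Icc a b, HasDerivAt x (deriv x t) t) ∧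
  (∀ t ∈ Set.Icc a b, deriv x t = deriv x a + ∫ u in a..t, w u)

/-- Explicit polynomial on the `n`-th interval. -/
noncomputable def Paux (Δ : ℝ) (n : ℕ) (t : ℝ) : ℝ :=
  ∑ k ∈ Finset.range (n + 1),
    ((-1 : ℝ) ^ k / (Nat.factorial (2 * k) : ℝ)) * (t - ((k : ℝ) - 1) * Δ) ^ (2 * k)

/-- Derivative of `Paux`. -/
noncomputable def Daux (Δ : ℝ) (n : ℕ) (t : ℝ) : ℝ :=
  ∑ k ∈ Finset.range (n + 1),
    ((-1 : ℝ) ^ k / (Nat.factorial (2 * k) : ℝ)) * (2 * k : ℕ) *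
      (t - ((k : ℝ) - 1) * Δ) ^ (2 * k - 1)

lemma hasDerivAt_Paux (Δ : ℝ) (n : ℕ) (t : ℝ) :
    HasDerivAt (fun s => Paux Δ n s) (Daux Δ n t) t := by
  unfold Paux Daux
  apply HasDerivAt.fun_sum
  intro k hk
  have h := (((hasDerivAt_id t).sub_const (((k : ℝ) - 1) * Δ)).fun_pow (2 * k)).const_mul
    ((-1 : ℝ) ^ k / (Nat.factorial (2 * k) : ℝ))
  simp only [id_eq] at h
  exact h.congr_deriv (by ring)

lemma hasDerivAt_Daux (Δ : ℝ) (n : ℕ) (t : ℝ) :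
    HasDerivAt (fun s => Daux Δ (n + 1) s) (-(Paux Δ n (t - Δ))) t := by
  have h : HasDerivAt (fun s => Daux Δ (n + 1) s)
      (∑ k ∈ Finset.range (n + 2),
        ((-1 : ℝ) ^ k / (Nat.factorial (2 * k) : ℝ)) * (2 * k : ℕ) *
          ((2 * k - 1 : ℕ) * (t - ((k : ℝ) - 1) * Δ) ^ (2 * k - 1 - 1))) t := by
    unfold Daux
    apply HasDerivAt.fun_sum
    intro k hk
    have h := (((hasDerivAt_id t).sub_const (((k : ℝ) - 1) * Δ)).fun_pow (2 * k - 1)).const_mul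
      (((-1 : ℝ) ^ k / (Nat.factorial (2 * k) : ℝ)) * (2 * k : ℕ))
    simp only [id_eq] at h
    exact h.congr_deriv (by ring)
  convert h using 1
  have h0 : ((-1 : ℝ) ^ 0 / (Nat.factorial (2 * 0) : ℝ)) * (2 * 0 : ℕ) *
      ((2 * 0 - 1 : ℕ) * (t - (((0 : ℕ) : ℝ) - 1) * Δ) ^ (2 * 0 - 1 - 1)) = 0 := by
    norm_num
  rw [Finset.sum_range_succ', h0, add_zero]
  unfold Paux
  rw [← Finset.sum_neg_distrib]
  apply Finset.sum_congr rfl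
  intro j hj
  have he : 2 * (j + 1) - 1 - 1 = 2 * j := by omega
  have he2 : (2 * (j + 1) - 1 : ℕ) = 2 * j + 1 := by omega
  have hf : (2 * (j + 1)) = (2 * j + 1) + 1 := by omega
  have hb : t - (((j : ℝ) + 1) - 1) * Δ = (t - Δ) - ((j : ℝ) - 1) * Δ := by ring
  have hfac : ((2 * (j + 1)).factorial : ℝ) =
      (2 * j + 2) * ((2 * j + 1) * ((2 * j).factorial : ℝ)) := by
    rw [hf, Nat.factorial_succ, Nat.factorial_succ]
    push_cast
    ring
  have hne : ((2 * j).factorial : ℝ) ≠ 0 := Nat.cast_ne_zero.mpr (Nat.factorial_ne_zero _)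
  rw [he, he2]
  push_cast [hb, hfac, pow_succ]
  field_simp

lemma continuous_Paux (Δ : ℝ) (n : ℕ) : Continuous (fun t => Paux Δ n t) := by
  unfold Paux
  apply continuous_finset_sum
  intro k _
  fun_prop

lemma continuous_Daux (Δ : ℝ) (n : ℕ) : Continuous (fun t => Daux Δ n t) := by
  unfold Daux
  apply continuous_finset_sum
  intro k _
  fun_prop

lemma rDelta_key (Δ : ℝ) (hΔ : 0 < Δ) (r : ℝ → ℝ) (hr : IsDelayCosine Δ r) :
    ∀ n : ℕ, ∀ t ∈ Set.Icc ((n : ℝ) * Δ) (((n : ℝ) + 1) * Δ),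
      deriv r t = Daux Δ (n + 1) t ∧ r t = Paux Δ (n + 1) t := by
  obtain ⟨hr1, hr2, hr3⟩ := hr
  -- continuity of r
  have hrc : Continuous r := by
    rw [continuous_iff_continuousAt]
    intro t
    rcases le_or_gt 0 t with ht | ht
    · exact (hr2 t ht).continuousAt
    · have hev : ∀ᶠ s in nhds t, r s = 1 := by
        filter_upwards [Iio_mem_nhds ht] with s hs
        exact hr1 s hs.le
      exact continuousAt_const.congr (by filter_upwards [hev] with s hs; rw [hs])
  have hshift : Continuous fun u => r (u - Δ) := hrc.comp (by fun_prop)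
  have hII : ∀ a b : ℝ, IntervalIntegrable (fun u => r (u - Δ)) volume a b :=
    fun a b => hshift.intervalIntegrable a b
  have hprim : Continuous fun t => ∫ u in (0:ℝ)..t, r (u - Δ) :=
    intervalIntegral.continuous_primitive hII 0
  have hcd : ContinuousOn (deriv r) (Set.Ici 0) :=
    hprim.neg.continuousOn.congr fun t ht => hr3 t ht
  -- main induction
  intro n
  induction n with
  | zero =>
    have hd : ∀ u ∈ Set.Icc (0:ℝ) Δ, deriv r u = Daux Δ 1 u := by
      intro u hu
      rw [hr3 u hu.1]
      have hint : (∫ v in (0:ℝ)..u, r (v - Δ)) = ∫ v in (0:ℝ)..u, (1:ℝ) := by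
        apply intervalIntegral.integral_congr
        intro v hv
        rw [Set.uIcc_of_le hu.1] at hv
        exact hr1 _ (by linarith [hv.1, hv.2, hu.2])
      rw [hint]
      simp [Daux, Finset.sum_range_succ]
    intro t ht
    simp only [Nat.cast_zero, zero_mul, zero_add, one_mul] at ht
    refine ⟨hd t ht, ?_⟩
    have ht0 : (0:ℝ) ≤ t := ht.1
    have hsub : Set.uIcc (0:ℝ) t ⊆ Set.Ici 0 := by
      rw [Set.uIcc_of_le ht0]; exact fun x hx => hx.1
    have hFTC : (∫ u in (0:ℝ)..t, deriv r u) = r t - r 0 :=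
      intervalIntegral.integral_eq_sub_of_hasDerivAt
        (fun u hu => hr2 u (hsub hu))
        ((hcd.mono hsub).intervalIntegrable)
    have hcongr : (∫ u in (0:ℝ)..t, deriv r u) = ∫ u in (0:ℝ)..t, Daux Δ 1 u := by
      apply intervalIntegral.integral_congr
      intro u hu
      rw [Set.uIcc_of_le ht0] at hu
      exact hd u ⟨hu.1, le_trans hu.2 ht.2⟩
    have hFTC2 : (∫ u in (0:ℝ)..t, Daux Δ 1 u) = Paux Δ 1 t - Paux Δ 1 0 :=
      intervalIntegral.integral_eq_sub_of_hasDerivAt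
        (fun u _ => hasDerivAt_Paux Δ 1 u)
        ((continuous_Daux Δ 1).intervalIntegrable 0 t)
    have hr0 : r 0 = 1 := hr1 0 le_rfl
    have hP0 : Paux Δ 1 0 = 1 := by
      simp [Paux, Finset.sum_range_succ]
    rw [hcongr, hFTC2, hr0, hP0] at hFTC
    linarith
  | succ n ih =>
    set e : ℝ := ((n : ℝ) + 1) * Δ with he
    have hee : e ∈ Set.Icc ((n : ℝ) * Δ) (((n : ℝ) + 1) * Δ) :=
      ⟨by nlinarith, le_rfl⟩
    obtain ⟨ihd, ihr⟩ := ih e hee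
    have he0 : (0:ℝ) ≤ e := by positivity
    -- D_{n+2} agrees with D_{n+1} at e
    have hDe : Daux Δ (n + 2) e = Daux Δ (n + 1) e := by
      unfold Daux
      rw [Finset.sum_range_succ]
      have : e - (((n : ℝ) + 2) - 1) * Δ = 0 := by push_cast [he]; ring
      rw [show ((n + 2 : ℕ) : ℝ) = (n : ℝ) + 2 by push_cast; ring] at *
      simp only [this]
      rw [zero_pow (by omega)]
      push_cast
      ring
    have hPe : Paux Δ (n + 2) e = Paux Δ (n + 1) e := by
      unfold Paux
      rw [Finset.sum_range_succ]
      have h2 : e - (((n + 2 : ℕ) : ℝ) - 1) * Δ = 0 := by push_cast [he]; ring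
      rw [h2, zero_pow (by omega)]
      ring
    have hd : ∀ u ∈ Set.Icc e (((n : ℝ) + 2) * Δ), deriv r u = Daux Δ (n + 2) u := by
      intro u hu
      have hue : e ≤ u := hu.1
      have hsplit : deriv r u = deriv r e - ∫ v in e..u, r (v - Δ) := by
        rw [hr3 u (le_trans he0 hue), hr3 e he0]
        rw [← intervalIntegral.integral_add_adjacent_intervals (hII 0 e) (hII e u)]
        ring
      have hcongr : (∫ v in e..u, r (v - Δ)) = ∫ v in e..u, Paux Δ (n + 1) (v - Δ) := by
        apply intervalIntegral.integral_congr
        intro v hv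
        rw [Set.uIcc_of_le hue] at hv
        have : v - Δ ∈ Set.Icc ((n : ℝ) * Δ) (((n : ℝ) + 1) * Δ) := by
          constructor
          · have := hv.1; rw [he] at this; nlinarith
          · have := hv.2; have := hu.2; nlinarith
        exact (ih _ this).2
      have hFTC : (∫ v in e..u, Paux Δ (n + 1) (v - Δ)) =
          (fun s => -Daux Δ (n + 2) s) u - (fun s => -Daux Δ (n + 2) s) e := by
        apply intervalIntegral.integral_eq_sub_of_hasDerivAt
        · intro v _
          have h := (hasDerivAt_Daux Δ (n + 1) v).neg; rw [neg_neg] at h; exact h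
        · exact ((continuous_Paux Δ (n+1)).comp (by fun_prop : Continuous fun v : ℝ => v - Δ)).intervalIntegrable e u
      rw [hsplit, hcongr, hFTC, ihd, ← hDe]
      ring
    intro t ht
    push_cast at ht
    have ht' : t ∈ Set.Icc e (((n : ℝ) + 2) * Δ) := by
      constructor
      · have := ht.1; rw [he]; linarith
      · have := ht.2; linarith
    refine ⟨hd t ht', ?_⟩
    have hte : e ≤ t := ht'.1
    have hsub : Set.uIcc e t ⊆ Set.Ici 0 := by
      rw [Set.uIcc_of_le hte]; exact fun x hx => le_trans he0 hx.1
    have hFTC : (∫ u in e..t, deriv r u) = r t - r e :=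
      intervalIntegral.integral_eq_sub_of_hasDerivAt
        (fun u hu => hr2 u (hsub hu))
        ((hcd.mono hsub).intervalIntegrable)
    have hcongr : (∫ u in e..t, deriv r u) = ∫ u in e..t, Daux Δ (n + 2) u := by
      apply intervalIntegral.integral_congr
      intro u hu
      rw [Set.uIcc_of_le hte] at hu
      exact hd u ⟨hu.1, le_trans hu.2 ht'.2⟩
    have hFTC2 : (∫ u in e..t, Daux Δ (n + 2) u) = Paux Δ (n + 2) t - Paux Δ (n + 2) e :=
      intervalIntegral.integral_eq_sub_of_hasDerivAt
        (fun u _ => hasDerivAt_Paux Δ (n + 2) u)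
        ((continuous_Daux Δ (n + 2)).intervalIntegrable e t)
    rw [hcongr, hFTC2] at hFTC
    rw [ihr, hPe] at hFTC
    linarith

/-- explicit piecewise-polynomial formula for `r_Δ`, `Δ > 0`. -/
theorem rDelta_explicit_formula (Δ : ℝ) (hΔ : 0 < Δ) (r : ℝ → ℝ)
    (hr : IsDelayCosine Δ r) :
    (∀ t ∈ Set.Icc (0:ℝ) Δ, r t = 1 - t ^ 2 / 2) ∧
    (∀ t ∈ Set.Icc Δ (2 * Δ), r t = 1 - t ^ 2 / 2 + (t - Δ) ^ 4 / 24) ∧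
    (∀ n : ℕ, 1 ≤ n → ∀ t ∈ Set.Icc (((n : ℝ) - 1) * Δ) ((n : ℝ) * Δ),
      r t = ∑ k ∈ Finset.range (n + 1),
        ((-1 : ℝ) ^ k / (Nat.factorial (2 * k) : ℝ)) * (t - ((k : ℝ) - 1) * Δ) ^ (2 * k)) := by
  have key := rDelta_key Δ hΔ r hr
  refine ⟨?_, ?_, ?_⟩
  · intro t ht
    have h := (key 0 t (by simpa using ht)).2
    rw [h]
    simp [Paux, Finset.sum_range_succ]
    ring
  · intro t ht
    have h := (key 1 t (by push_cast; constructor <;> [simpa using ht.1; nlinarith [ht.2]])).2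
    rw [h]
    simp [Paux, Finset.sum_range_succ, Nat.factorial]
    ring
  · intro n hn t ht
    obtain ⟨m, rfl⟩ : ∃ m, n = m + 1 := ⟨n - 1, by omega⟩
    have h := (key m t (by push_cast at ht ⊢; constructor <;> [linarith [ht.1]; linarith [ht.2]])).2
    rw [h]
    rfl
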